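/- arXiv:1909.07232 — 4 statements merged into one kernel-verified Lean document; each statement's English description precedes it below -/
import Mathlib

section
/- For every integer d ≥ 1, ∫_0^1 sup_{t ∈ ℝ} |Φ_d(t, v)| dv ≤ 5 + ln d, where Φ_d(t, v) = ∑_{j=1}^{d} Trg_j(t)·Trg_j(t − v). -/
open Real

/-- The trigonometric basis of 1-periodic functions: `Trg 1 x = 1` and, for `j ≥ 2`,
`Trg j x = √2 cos(2π⌊j/2⌋x)` if `j` is even and `Trg j x = √2 sin(2π⌊j/2⌋x)` if `j` is odd. -/
noncomputable def Trg (j : ℕ) (x : ℝ) : ℝ :=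
  if j = 1 then 1
  else if j % 2 = 0 then Real.sqrt 2 * Real.cos (2 * Real.pi * ((j / 2 : ℕ) : ℝ) * x)
  else Real.sqrt 2 * Real.sin (2 * Real.pi * ((j / 2 : ℕ) : ℝ) * x)

/-- The Dirichlet-type kernel `1 + ∑_{k=1}^m 2 cos(2πkv)`. -/
noncomputable def Skernel (m : ℕ) (v : ℝ) : ℝ :=
  1 + ∑ k ∈ Finset.Icc 1 m, 2 * Real.cos (2 * Real.pi * (k : ℝ) * v)

lemma Trg_even (k : ℕ) (hk : 1 ≤ k) (x : ℝ) :
    Trg (2 * k) x = Real.sqrt 2 * Real.cos (2 * Real.pi * (k : ℝ) * x) := by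
  have h1 : 2 * k ≠ 1 := by omega
  have h2 : (2 * k) % 2 = 0 := by omega
  have h3 : (2 * k) / 2 = k := by omega
  simp [Trg, h1, h2, h3]

lemma Trg_odd (k : ℕ) (hk : 1 ≤ k) (x : ℝ) :
    Trg (2 * k + 1) x = Real.sqrt 2 * Real.sin (2 * Real.pi * (k : ℝ) * x) := by
  have h1 : 2 * k + 1 ≠ 1 := by omega
  have h2 : (2 * k + 1) % 2 = 1 := by omega
  have h3 : (2 * k + 1) / 2 = k := by omega
  simp [Trg, h1, h2, h3, show k ≠ 0 by omega]

lemma Trg_pair (k : ℕ) (hk : 1 ≤ k) (t v : ℝ) :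
    Trg (2 * k) t * Trg (2 * k) (t - v) + Trg (2 * k + 1) t * Trg (2 * k + 1) (t - v)
      = 2 * Real.cos (2 * Real.pi * (k : ℝ) * v) := by
  rw [Trg_even k hk, Trg_even k hk, Trg_odd k hk, Trg_odd k hk]
  have h2 : Real.sqrt 2 * Real.sqrt 2 = 2 := Real.mul_self_sqrt (by norm_num)
  have hc : 2 * Real.pi * (k : ℝ) * v
      = 2 * Real.pi * (k : ℝ) * t - 2 * Real.pi * (k : ℝ) * (t - v) := by ring
  rw [hc, Real.cos_sub]
  linear_combination (Real.cos (2 * Real.pi * (k : ℝ) * t) * Real.cos (2 * Real.pi * (k : ℝ) * (t - v))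
    + Real.sin (2 * Real.pi * (k : ℝ) * t) * Real.sin (2 * Real.pi * (k : ℝ) * (t - v))) * h2

lemma sum_odd (m : ℕ) (t v : ℝ) :
    ∑ j ∈ Finset.Icc 1 (2 * m + 1), Trg j t * Trg j (t - v) = Skernel m v := by
  induction m with
  | zero => simp [Trg, Skernel]
  | succ m ih =>
    have e1 : 2 * (m + 1) + 1 = (2 * m + 2) + 1 := by ring
    rw [e1, Finset.sum_Icc_succ_top (by omega), Finset.sum_Icc_succ_top (by omega)]
    have e2 : 2 * m + 2 = 2 * (m + 1) := by ring
    have e3 : 2 * m + 2 + 1 = 2 * (m + 1) + 1 := by ring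
    rw [ih]
    have hp := Trg_pair (m + 1) (by omega) t v
    rw [e2, add_assoc, hp]
    rw [Skernel, Skernel, Finset.sum_Icc_succ_top (by omega : 1 ≤ m + 1)]
    push_cast
    ring

lemma sin_mul_Skernel (m : ℕ) (v : ℝ) :
    Real.sin (Real.pi * v) * Skernel m v = Real.sin ((2 * (m : ℝ) + 1) * Real.pi * v) := by
  induction m with
  | zero => simp [Skernel]
  | succ m ih =>
    rw [Skernel, Finset.sum_Icc_succ_top (by omega)]
    have : Real.sin (Real.pi * v) *
        (1 + (∑ k ∈ Finset.Icc 1 m, 2 * Real.cos (2 * Real.pi * (k : ℝ) * v)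
          + 2 * Real.cos (2 * Real.pi * ((m + 1 : ℕ) : ℝ) * v)))
        = Real.sin (Real.pi * v) * Skernel m v
          + 2 * Real.sin (Real.pi * v) * Real.cos (2 * Real.pi * ((m + 1 : ℕ) : ℝ) * v) := by
      rw [Skernel]; ring
    rw [this, ih]
    have hs : 2 * Real.sin (Real.pi * v) * Real.cos (2 * Real.pi * ((m + 1 : ℕ) : ℝ) * v)
        = Real.sin (Real.pi * v + 2 * Real.pi * ((m + 1 : ℕ) : ℝ) * v)
          + Real.sin (Real.pi * v - 2 * Real.pi * ((m + 1 : ℕ) : ℝ) * v) := by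
      rw [Real.sin_add, Real.sin_sub]; ring
    rw [hs]
    have h1 : Real.pi * v + 2 * Real.pi * ((m + 1 : ℕ) : ℝ) * v
        = (2 * ((m + 1 : ℕ) : ℝ) + 1) * Real.pi * v := by push_cast; ring
    have h2 : Real.pi * v - 2 * Real.pi * ((m + 1 : ℕ) : ℝ) * v
        = -((2 * (m : ℝ) + 1) * Real.pi * v) := by push_cast; ring
    rw [h1, h2, Real.sin_neg]
    push_cast
    ring

lemma Skernel_abs_le (m : ℕ) (v : ℝ) : |Skernel m v| ≤ 2 * m + 1 := by
  rw [Skernel]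
  calc |1 + ∑ k ∈ Finset.Icc 1 m, 2 * Real.cos (2 * Real.pi * (k : ℝ) * v)|
      ≤ |(1 : ℝ)| + |∑ k ∈ Finset.Icc 1 m, 2 * Real.cos (2 * Real.pi * (k : ℝ) * v)| :=
        abs_add_le _ _
    _ ≤ 1 + ∑ k ∈ Finset.Icc 1 m, |2 * Real.cos (2 * Real.pi * (k : ℝ) * v)| := by
        rw [abs_one]
        exact add_le_add_right (Finset.abs_sum_le_sum_abs _ _) 1
    _ ≤ 1 + ∑ k ∈ Finset.Icc 1 m, 2 := by
        gcongr with k hk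
        rw [abs_mul, abs_two]
        nlinarith [abs_cos_le_one (2 * Real.pi * (k : ℝ) * v)]
    _ = 1 + 2 * m := by
        rw [Finset.sum_const, Nat.card_Icc, Nat.add_sub_cancel, nsmul_eq_mul]
        ring
    _ ≤ 2 * m + 1 := by linarith

lemma Skernel_abs_le_inv (m : ℕ) (v : ℝ) (h0 : 0 < v) (h1 : v ≤ 1 / 2) :
    |Skernel m v| ≤ 1 / (2 * v) := by
  have hsin : 2 * v ≤ Real.sin (Real.pi * v) := by
    have := Real.le_sin_mul (x := 2 * v) (by linarith) (by linarith)
    have e : Real.pi / 2 * (2 * v) = Real.pi * v := by ring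
    rwa [e] at this
  have hsinpos : 0 < Real.sin (Real.pi * v) := lt_of_lt_of_le (by linarith) hsin
  have key := sin_mul_Skernel m v
  have habs : Real.sin (Real.pi * v) * |Skernel m v| ≤ 1 := by
    have : |Real.sin (Real.pi * v) * Skernel m v| ≤ 1 := by
      rw [key]; exact abs_sin_le_one _
    rwa [abs_mul, abs_of_pos hsinpos] at this
  rw [le_div_iff₀ (by linarith)]
  calc |Skernel m v| * (2 * v) ≤ |Skernel m v| * Real.sin (Real.pi * v) := by
        exact mul_le_mul_of_nonneg_left hsin (abs_nonneg _)
    _ ≤ 1 := by linarith [habs]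

lemma Skernel_symm (m : ℕ) (v : ℝ) : Skernel m (1 - v) = Skernel m v := by
  rw [Skernel, Skernel]
  congr 1
  apply Finset.sum_congr rfl
  intro k _
  congr 1
  have e : 2 * Real.pi * (k : ℝ) * (1 - v) = (k : ℝ) * (2 * Real.pi) - 2 * Real.pi * (k : ℝ) * v := by
    ring
  rw [e]
  exact_mod_cast Real.cos_nat_mul_two_pi_sub (2 * Real.pi * (k : ℝ) * v) k

lemma Skernel_continuous (m : ℕ) : Continuous fun v => Skernel m v := by
  unfold Skernel
  fun_prop

lemma Skernel_integral_le (m : ℕ) :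
    ∫ v in (0 : ℝ)..1, |Skernel m v| ≤ 1 + Real.log (2 * m + 1) := by
  set n : ℝ := 2 * (m : ℕ) + 1 with hn
  have hn1 : (1 : ℝ) ≤ n := by
    have : (0 : ℝ) ≤ (m : ℝ) := Nat.cast_nonneg m
    rw [hn]; linarith
  have hnpos : (0 : ℝ) < n := by linarith
  set a : ℝ := 1 / (2 * n) with ha
  have ha0 : 0 < a := by positivity
  have ha2 : a ≤ 1 / 2 := by
    rw [ha, div_le_div_iff₀ (by positivity) (by norm_num)]
    linarith
  have hcont : Continuous fun v : ℝ => |Skernel m v| := (Skernel_continuous m).abs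
  have hint : ∀ p q : ℝ, IntervalIntegrable (fun v => |Skernel m v|)
      MeasureTheory.volume p q := fun p q => hcont.intervalIntegrable p q
  have I1 : ∫ v in (0 : ℝ)..a, |Skernel m v| ≤ 1 / 2 := by
    calc ∫ v in (0 : ℝ)..a, |Skernel m v| ≤ ∫ _v in (0 : ℝ)..a, n := by
          apply intervalIntegral.integral_mono_on ha0.le (hint 0 a) intervalIntegrable_const
          intro v _
          have := Skernel_abs_le m v
          rw [hn]; push_cast; linarith
      _ = a * n := by rw [intervalIntegral.integral_const]; simp
      _ = 1 / 2 := by rw [ha]; field_simp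
  have hinv : IntervalIntegrable (fun v : ℝ => (2 * v)⁻¹) MeasureTheory.volume a (1 / 2) := by
    apply ContinuousOn.intervalIntegrable
    apply ContinuousOn.inv₀ (by fun_prop)
    intro x hx
    rw [Set.uIcc_of_le ha2] at hx
    have : 0 < x := lt_of_lt_of_le ha0 hx.1
    positivity
  have I2 : ∫ v in a..(1 / 2 : ℝ), |Skernel m v| ≤ 1 / 2 * Real.log n := by
    calc ∫ v in a..(1 / 2 : ℝ), |Skernel m v| ≤ ∫ v in a..(1 / 2 : ℝ), (2 * v)⁻¹ := by
          apply intervalIntegral.integral_mono_on ha2 (hint a (1 / 2)) hinv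
          intro v hv
          have hv0 : 0 < v := lt_of_lt_of_le ha0 hv.1
          have := Skernel_abs_le_inv m v hv0 hv.2
          rwa [one_div] at this
      _ = 1 / 2 * Real.log n := by
          have e : ∀ v : ℝ, (2 * v)⁻¹ = 2⁻¹ * v⁻¹ := fun v => by rw [mul_inv]
          simp_rw [e]
          rw [intervalIntegral.integral_const_mul, integral_inv_of_pos ha0 (by norm_num)]
          have e2 : (1 / 2 : ℝ) / a = n := by rw [ha]; field_simp
          rw [e2]
          norm_num
  have half : ∫ v in (0 : ℝ)..(1 / 2), |Skernel m v|
      ≤ 1 / 2 + 1 / 2 * Real.log n := by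
    have split := intervalIntegral.integral_add_adjacent_intervals
      (hint 0 a) (hint a (1 / 2))
    linarith [split]
  have symm : ∫ v in (1 / 2 : ℝ)..1, |Skernel m v|
      = ∫ v in (0 : ℝ)..(1 / 2), |Skernel m v| := by
    have h := intervalIntegral.integral_comp_sub_left (a := 0) (b := 1 / 2)
      (fun v => |Skernel m v|) 1
    simp only [Skernel_symm] at h
    rw [show (1 : ℝ) - 1 / 2 = 1 / 2 by norm_num, sub_zero] at h
    exact h.symm
  have total := intervalIntegral.integral_add_adjacent_intervals
    (hint 0 (1 / 2)) (hint (1 / 2) 1)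
  have hng : Real.log n = Real.log (2 * (m : ℝ) + 1) := by rw [hn]
  rw [← total, symm]
  rw [hng] at half
  push_cast
  linarith

lemma sup_le_Skernel (d : ℕ) (hd : 1 ≤ d) (v : ℝ) :
    (⨆ t : ℝ, |∑ j ∈ Finset.Icc 1 d, Trg j t * Trg j (t - v)|)
      ≤ |Skernel ((d - 1) / 2) v| + 2 := by
  set m := (d - 1) / 2 with hm
  apply ciSup_le
  intro t
  rcases Nat.even_or_odd d with he | ho
  · -- d = 2m + 2
    have hd2 : d = 2 * m + 2 := by
      rcases he with ⟨r, hr⟩; omega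
    rw [hd2]
    have e2 : 2 * m + 2 = 2 * (m + 1) := by ring
    rw [Finset.sum_Icc_succ_top (by omega : 1 ≤ 2 * m + 2), sum_odd m t v]
    rw [e2, Trg_even (m + 1) (by omega), Trg_even (m + 1) (by omega)]
    have h2 : Real.sqrt 2 * Real.sqrt 2 = 2 := Real.mul_self_sqrt (by norm_num)
    calc |Skernel m v + Real.sqrt 2 * Real.cos (2 * Real.pi * ((m + 1 : ℕ) : ℝ) * t) *
            (Real.sqrt 2 * Real.cos (2 * Real.pi * ((m + 1 : ℕ) : ℝ) * (t - v)))|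
        ≤ |Skernel m v| + |Real.sqrt 2 * Real.cos (2 * Real.pi * ((m + 1 : ℕ) : ℝ) * t) *
            (Real.sqrt 2 * Real.cos (2 * Real.pi * ((m + 1 : ℕ) : ℝ) * (t - v)))| := abs_add_le _ _
      _ ≤ |Skernel m v| + 2 := by
          gcongr
          have e3 : Real.sqrt 2 * Real.cos (2 * Real.pi * ((m + 1 : ℕ) : ℝ) * t) *
              (Real.sqrt 2 * Real.cos (2 * Real.pi * ((m + 1 : ℕ) : ℝ) * (t - v)))
              = 2 * (Real.cos (2 * Real.pi * ((m + 1 : ℕ) : ℝ) * t) *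
                Real.cos (2 * Real.pi * ((m + 1 : ℕ) : ℝ) * (t - v))) := by
            linear_combination (Real.cos (2 * Real.pi * ((m + 1 : ℕ) : ℝ) * t) *
              Real.cos (2 * Real.pi * ((m + 1 : ℕ) : ℝ) * (t - v))) * h2
          rw [e3, abs_mul, abs_two, abs_mul]
          nlinarith [abs_cos_le_one (2 * Real.pi * ((m + 1 : ℕ) : ℝ) * t),
            abs_cos_le_one (2 * Real.pi * ((m + 1 : ℕ) : ℝ) * (t - v)),
            abs_nonneg (Real.cos (2 * Real.pi * ((m + 1 : ℕ) : ℝ) * t))]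
  · -- d = 2m + 1
    have hd2 : d = 2 * m + 1 := by
      rcases ho with ⟨r, hr⟩; omega
    rw [hd2, sum_odd m t v]
    linarith [abs_nonneg (Skernel m v)]

/-- Bound on the integral over one period of the sup over `t` of the kernel
`Φ_d(t,v) = ∑_{j=1}^d Trg_j(t) Trg_j(t-v)`. -/
theorem integral_sup_trig_kernel_le (d : ℕ) (hd : 1 ≤ d) :
    ∫ v in (0 : ℝ)..1, (⨆ t : ℝ, |∑ j ∈ Finset.Icc 1 d, Trg j t * Trg j (t - v)|)
      ≤ 5 + Real.log d := by
  have hlogd : 0 ≤ Real.log d := Real.log_nonneg (by exact_mod_cast hd)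
  set m := (d - 1) / 2 with hm
  by_cases hI : IntervalIntegrable
      (fun v => ⨆ t : ℝ, |∑ j ∈ Finset.Icc 1 d, Trg j t * Trg j (t - v)|)
      MeasureTheory.volume 0 1
  · have hgc : Continuous fun v => |Skernel m v| + 2 :=
      (Skernel_continuous m).abs.add continuous_const
    calc ∫ v in (0 : ℝ)..1, (⨆ t : ℝ, |∑ j ∈ Finset.Icc 1 d, Trg j t * Trg j (t - v)|)
        ≤ ∫ v in (0 : ℝ)..1, (|Skernel m v| + 2) := by
          apply intervalIntegral.integral_mono_on (by norm_num) hI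
            (hgc.intervalIntegrable 0 1)
          intro v _
          exact sup_le_Skernel d hd v
      _ = (∫ v in (0 : ℝ)..1, |Skernel m v|) + ∫ v in (0 : ℝ)..1, (2 : ℝ) := by
          rw [intervalIntegral.integral_add
            (((Skernel_continuous m).abs).intervalIntegrable 0 1)
            (intervalIntegrable_const)]
      _ ≤ (1 + Real.log (2 * m + 1)) + 2 := by
          rw [intervalIntegral.integral_const]
          simp only [smul_eq_mul, sub_zero, one_mul]
          linarith [Skernel_integral_le m]
      _ ≤ 5 + Real.log d := by
          have hmd : (2 * (m : ℝ) + 1) ≤ (d : ℝ) := by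
            have : 2 * m + 1 ≤ d := by omega
            exact_mod_cast this
          have := Real.log_le_log (by positivity) hmd
          linarith
  · rw [intervalIntegral.integral_undef hI]
    linarith
end

section
/- Let a_max ≥ 0, let a be a real number with −a_max ≤ a ≤ 0, and let j, p be integers with 2 ≤ j ≤ p. Set θ_j = 2π⌊j/2⌋/p. Then (1/p)·|Re( 1/(1 − e^{a/p + iθ_j}) )| ≤ a_max·e^{a_max}/j² + 1/(2p). -/
open Real Complex

private lemma aux_theta_sq (P M : ℝ) (hP : P ≠ 0) :
    2 / Real.pi ^ 2 * (2 * Real.pi * M / P) ^ 2 = 8 * M ^ 2 / P ^ 2 := by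
  have hπ : Real.pi ≠ 0 := Real.pi_ne_zero
  field_simp
  ring

set_option maxHeartbeats 1000000 in
/-- Bound on the real part of the resolvent of the complex geometric ratio
`q̃_j = e^{a/p + iθ_j}` with `θ_j = 2π⌊j/2⌋/p`, for `-a_max ≤ a ≤ 0` and `2 ≤ j ≤ p`:
`(1/p)|Re(1/(1 - q̃_j))| ≤ a_max e^{a_max}/j² + 1/(2p)`. -/
theorem re_resolvent_bound (amax a : ℝ) (hamax : 0 ≤ amax) (ha1 : -amax ≤ a)
    (ha2 : a ≤ 0) (j p : ℕ) (hj : 2 ≤ j) (hjp : j ≤ p) :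
    (1 / (p : ℝ)) *
        |(1 / (1 - Complex.exp (((a / p : ℝ) : ℂ)
            + ((2 * Real.pi * ((j / 2 : ℕ) : ℝ) / p : ℝ) : ℂ) * Complex.I))).re|
      ≤ amax * Real.exp amax / (j : ℝ) ^ 2 + 1 / (2 * p) := by
  have hp : 0 < p := lt_of_lt_of_le (by norm_num) (hj.trans hjp)
  have hpR : (0:ℝ) < p := by exact_mod_cast hp
  set m : ℕ := j / 2 with hm
  have hm1 : 1 ≤ m := Nat.one_le_div_iff (by norm_num) |>.mpr hj
  have h2m : 2 * m ≤ p := by omega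
  have hj4m : (j : ℝ) ≤ 4 * m := by
    have h1 : j ≤ 2 * m + 1 := by omega
    have hm1' : (1:ℝ) ≤ m := by exact_mod_cast hm1
    have h2 : (j:ℝ) ≤ 2 * m + 1 := by exact_mod_cast h1
    linarith
  set x : ℝ := a / p with hx
  set θ : ℝ := 2 * Real.pi * (m : ℝ) / p with hθ
  set r : ℝ := Real.exp x with hr
  -- basic facts about x, r, θ
  have hrpos : 0 < r := Real.exp_pos x
  have hxle : x ≤ 0 := div_nonpos_of_nonpos_of_nonneg ha2 hpR.le
  have hr1 : r ≤ 1 := Real.exp_le_one_iff.mpr hxle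
  have hxge : -amax ≤ x := by
    rw [hx, le_div_iff₀ hpR]
    have h1 : (1:ℝ) ≤ p := by exact_mod_cast hp
    nlinarith
  have hrge : Real.exp (-amax) ≤ r := Real.exp_le_exp.mpr hxge
  have hr2 : 1 - r ^ 2 ≤ 2 * amax / p := by
    have h1 : r ^ 2 = Real.exp (2 * x) := by
      rw [hr, sq, ← Real.exp_add]; ring_nf
    have h2 : 2 * x + 1 ≤ Real.exp (2 * x) := Real.add_one_le_exp _
    have h3 : -(2 * amax) / p ≤ 2 * x := by
      rw [hx]
      have h4 : 2 * (a / p) = 2 * a / p := by ring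
      rw [h4, div_le_div_iff₀ hpR hpR]
      nlinarith
    rw [h1]
    have := Real.exp_pos (2 * x)
    have h5 : -(2*amax)/p = -(2*amax/p) := by ring
    linarith [h5 ▸ h3]
  have hθpos : 0 < θ := by
    rw [hθ]
    have : (0:ℝ) < (m:ℝ) := by exact_mod_cast hm1
    positivity
  have hθπ : θ ≤ Real.pi := by
    rw [hθ, div_le_iff₀ hpR]
    have : (2 * m : ℝ) ≤ p := by exact_mod_cast h2m
    nlinarith [Real.pi_pos]
  have hcos : Real.cos θ ≤ 1 - 2 / Real.pi ^ 2 * θ ^ 2 :=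
    Real.cos_le_one_sub_mul_cos_sq (by rw [_root_.abs_of_nonneg hθpos.le]; exact hθπ)
  have hθsq : 2 / Real.pi ^ 2 * θ ^ 2 = 8 * (m:ℝ)^2 / p^2 := by
    rw [hθ]; exact aux_theta_sq _ _ hpR.ne'
  -- the complex number and its real part
  set z : ℂ := ((x : ℝ) : ℂ) + ((θ : ℝ) : ℂ) * Complex.I with hz
  have hzre : z.re = x := by simp [hz]
  have hzim : z.im = θ := by simp [hz]
  set w : ℂ := Complex.exp z with hw
  have hwre : w.re = r * Real.cos θ := by
    rw [hw, Complex.exp_re, hzre, hzim, hr]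
  have hwim : w.im = r * Real.sin θ := by
    rw [hw, Complex.exp_im, hzre, hzim, hr]
  set D : ℝ := Complex.normSq (1 - w) with hD
  have hDval : D = 1 - 2 * r * Real.cos θ + r ^ 2 := by
    rw [hD, Complex.normSq_apply]
    simp only [Complex.sub_re, Complex.sub_im, Complex.one_re, Complex.one_im, hwre, hwim]
    linear_combination (r:ℝ)^2 * Real.sin_sq_add_cos_sq θ
  have hre : (1 / (1 - w)).re = (1 - r * Real.cos θ) / D := by
    rw [one_div, Complex.inv_re, hD]
    simp [Complex.sub_re, hwre]
  rw [hre]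
  -- now everything is real arithmetic; forget the definitions
  clear_value D w z r θ x m
  clear hz hw hD hwre hwim hx hθ hr hm hjp h2m ha1 ha2 hp
  -- finish with pure real arithmetic
  have hjR : (2:ℝ) ≤ j := by exact_mod_cast hj
  have hjpos : (0:ℝ) < (j:ℝ)^2 := by positivity
  have honecos : 8 * (m:ℝ)^2 / p^2 ≤ 1 - Real.cos θ := by
    rw [← hθsq]; linarith
  have hcos1 : Real.cos θ ≤ 1 := Real.cos_le_one θ
  have hDlb : Real.exp (-amax) * (j:ℝ)^2 / p^2 ≤ D := by
    have h1 : 2 * r * (1 - Real.cos θ) ≤ D := by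
      rw [hDval]; nlinarith [sq_nonneg (1 - r)]
    have h2 : 2 * Real.exp (-amax) * (8 * (m:ℝ)^2 / p^2) ≤ 2 * r * (1 - Real.cos θ) := by
      have hc1 : (0:ℝ) ≤ 1 - Real.cos θ := by linarith
      have := mul_le_mul hrge honecos (by positivity) hrpos.le
      nlinarith
    have h3 : Real.exp (-amax) * (j:ℝ)^2 / p^2 ≤ 2 * Real.exp (-amax) * (8 * (m:ℝ)^2 / p^2) := by
      have hjsq : (j:ℝ)^2 ≤ 16 * (m:ℝ)^2 := by nlinarith [(by positivity : (0:ℝ) ≤ (j:ℝ))]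
      have hexp := Real.exp_pos (-amax)
      rw [div_le_iff₀ (by positivity : (0:ℝ) < (p:ℝ)^2)]
      have heq : 2 * Real.exp (-amax) * (8 * (m:ℝ)^2 / p^2) * p^2
          = 16 * Real.exp (-amax) * (m:ℝ)^2 := by
        field_simp
        ring
      rw [heq]
      nlinarith
    linarith
  have hDpos : 0 < D := lt_of_lt_of_le (by positivity) hDlb
  have hr2' : 0 ≤ 1 - r ^ 2 := by nlinarith
  have hwne : (0:ℝ) ≤ 1 - r * Real.cos θ := by nlinarith [Real.neg_one_le_cos θ]
  have hre_id : (1 - r * Real.cos θ) / D = 1/2 + (1 - r^2) / (2 * D) := by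
    have h : 2 * (1 - r * Real.cos θ) = D + (1 - r^2) := by rw [hDval]; ring
    field_simp
    linear_combination h
  have habs : |(1 - r * Real.cos θ) / D| = (1 - r * Real.cos θ) / D :=
    _root_.abs_of_nonneg (div_nonneg hwne hDpos.le)
  rw [habs, hre_id]
  have key : (1 - r^2) / (2 * D) ≤ amax * Real.exp amax / (j:ℝ)^2 * p := by
    rw [div_le_iff₀ (by positivity)]
    have hexp : Real.exp (-amax) * Real.exp amax = 1 := by
      rw [← Real.exp_add]; norm_num
    have h2 : amax * Real.exp amax / (j:ℝ)^2 * p * (2 * (Real.exp (-amax) * (j:ℝ)^2 / p^2))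
        ≤ amax * Real.exp amax / (j:ℝ)^2 * p * (2 * D) :=
      mul_le_mul_of_nonneg_left (by linarith) (by positivity)
    have h3 : amax * Real.exp amax / (j:ℝ)^2 * p * (2 * (Real.exp (-amax) * (j:ℝ)^2 / p^2))
        = 2 * amax / p := by
      field_simp
      linear_combination amax * hexp
    linarith [h3 ▸ h2]
  have hfin := mul_le_mul_of_nonneg_right key (by positivity : (0:ℝ) ≤ 1/(p:ℝ))
  have heq2 : amax * Real.exp amax / (j:ℝ)^2 * p * (1/p) = amax * Real.exp amax / (j:ℝ)^2 := by
    field_simp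
  calc (1 / (p:ℝ)) * (1/2 + (1 - r^2) / (2 * D))
      = 1 / (2 * p) + (1 - r^2) / (2 * D) * (1/p) := by ring
    _ ≤ 1 / (2 * p) + amax * Real.exp amax / (j:ℝ)^2 := by linarith [heq2 ▸ hfin]
    _ = amax * Real.exp amax / (j:ℝ)^2 + 1 / (2 * p) := by ring
end

section
/- Let x be a real number and let j, p be integers with 2 ≤ j ≤ p, and set θ_j = 2π⌊j/2⌋/p. Then cosh x > cos θ_j and |cos θ_j / (2·(cos θ_j − cosh x))| ≤ p²/j². -/
open Real

/-- For the grid angle `θ_j = 2π⌊j/2⌋/p` with `2 ≤ j ≤ p` and any real `x`: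
`cosh x > cos θ_j` and `|cos θ_j / (2(cos θ_j - cosh x))| ≤ p²/j².` -/
theorem cross_term_bound (x : ℝ) (j p : ℕ) (hj : 2 ≤ j) (hjp : j ≤ p) :
    let θ := 2 * Real.pi * ((j / 2 : ℕ) : ℝ) / p
    Real.cos θ < Real.cosh x ∧
      |Real.cos θ / (2 * (Real.cos θ - Real.cosh x))| ≤ (p : ℝ) ^ 2 / (j : ℝ) ^ 2 := by
  intro θ
  set m : ℕ := j / 2 with hm
  have hm1 : 1 ≤ m := by omega
  have h2m : 2 * m ≤ p := by omega
  have h4m : j ≤ 4 * m := by omega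
  have hp2 : 2 ≤ p := le_trans hj hjp
  have hp0 : (0:ℝ) < p := by positivity
  have hj0 : (0:ℝ) < j := by positivity
  have hm0 : (0:ℝ) < m := by exact_mod_cast hm1
  set t : ℝ := Real.pi * m / p with ht
  have hθt : θ = 2 * t := by rw [ht]; ring
  have ht0 : 0 < t := by positivity
  have ht2 : t ≤ Real.pi / 2 := by
    rw [ht, div_le_div_iff₀ hp0 two_pos]
    have : (2:ℝ) * m ≤ p := by exact_mod_cast h2m
    nlinarith [Real.pi_pos]
  have hsin : 2 / Real.pi * t ≤ Real.sin t := Real.mul_le_sin ht0.le ht2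
  have hsinval : (j:ℝ) / (2 * p) ≤ Real.sin t := by
    refine le_trans ?_ hsin
    have hteq : 2 / Real.pi * t = 2 * m / p := by
      rw [ht]; field_simp [Real.pi_ne_zero]
    rw [hteq, div_le_div_iff₀ (by positivity) hp0]
    have h4m' : (j:ℝ) ≤ 4 * m := by exact_mod_cast h4m
    nlinarith
  have hcos : Real.cos θ = 1 - 2 * Real.sin t ^ 2 := by
    rw [hθt, Real.cos_two_mul, Real.sin_sq]; ring
  have hsin0 : 0 < Real.sin t := lt_of_lt_of_le (by positivity) hsinval
  have hD : (j:ℝ)^2 / (2 * p^2) ≤ Real.cosh x - Real.cos θ := by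
    have h1 : 1 ≤ Real.cosh x := Real.one_le_cosh x
    have h2 : (j:ℝ)/(2*p) * ((j:ℝ)/(2*p)) ≤ Real.sin t * Real.sin t :=
      mul_le_mul hsinval hsinval (by positivity) hsin0.le
    rw [hcos]
    have : (j:ℝ)^2 / (2 * p^2) ≤ 2 * Real.sin t ^ 2 := by
      rw [pow_two, pow_two]
      rw [div_le_iff₀ (by positivity)] at *
      nlinarith
    linarith
  have hDpos : 0 < Real.cosh x - Real.cos θ := lt_of_lt_of_le (by positivity) hD
  refine ⟨by linarith, ?_⟩
  have habs : |Real.cos θ / (2 * (Real.cos θ - Real.cosh x))| =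
      |Real.cos θ| / (2 * (Real.cosh x - Real.cos θ)) := by
    rw [abs_div]
    congr 1
    rw [abs_of_neg (by linarith)]
    ring
  rw [habs]
  have hc1 : |Real.cos θ| ≤ 1 := Real.abs_cos_le_one θ
  have h2D : (j:ℝ)^2 ≤ p^2 * (2 * (Real.cosh x - Real.cos θ)) := by
    rw [div_le_iff₀ (by positivity)] at hD
    nlinarith
  rw [div_le_div_iff₀ (by linarith) (by positivity)]
  nlinarith [sq_nonneg (j:ℝ)]
end

section
/- Let a ≤ 0 be a real number, n > 0, and let s : [0, n] → ℝ be measurable with ∫_0^n s(t)² dt < ∞. Then | a·∫_0^n s(t)·( ∫_0^t e^{a(t−u)}·s(u)·(1 + e^{2au})/2 du ) dt | ≤ ∫_0^n s(t)² dt. -/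
open Real MeasureTheory

lemma aux_exp_integral (a c d : ℝ) (ha : a ≠ 0) :
    ∫ x in c..d, Real.exp (a * x) = (Real.exp (a * d) - Real.exp (a * c)) / a := by
  have h : ∀ x ∈ Set.uIcc c d, HasDerivAt (fun y => Real.exp (a * y) / a) (Real.exp (a * x)) x := by
    intro x _
    have h1 := ((Real.hasDerivAt_exp (a * x)).comp x ((hasDerivAt_id x).const_mul a)).div_const a
    have h2 : Real.exp (a * x) * a / a = Real.exp (a * x) := by field_simp
    simpa [h2] using h1
  have := intervalIntegral.integral_eq_sub_of_hasDerivAt h ?_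
  · rw [this]; ring
  · apply Continuous.intervalIntegrable; continuity

lemma aux_kernel_integral (a : ℝ) (ha : a < 0) (u v : ℝ) :
    ∫ t in u..v, Real.exp (a * (t - u)) = (1 - Real.exp (a * (v - u))) / (-a) := by
  have := intervalIntegral.integral_comp_sub_right (a := u) (b := v) (fun x => Real.exp (a * x)) u
  rw [this, aux_exp_integral a _ _ ha.ne]
  rw [sub_self]
  rw [div_eq_div_iff ha.ne (neg_ne_zero.mpr ha.ne)]
  ring_nf
  simp [Real.exp_zero]
  ring

set_option maxHeartbeats 1000000 in
/-- Deterministic bound `|a ∫_0^n s(t) ε̌_t(s) dt| ≤ ‖s‖²_{L²[0,n]}` for the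
Ornstein–Uhlenbeck correction kernel
`ε̌_t(s) = a ∫_0^t e^{a(t-u)} s(u) (1 + e^{2au})/2 du` with nonpositive drift `a ≤ 0`. -/
theorem ou_correction_kernel_bound (a : ℝ) (ha : a ≤ 0) (n : ℝ) (hn : 0 < n)
    (s : ℝ → ℝ) (hs : Measurable s)
    (hs2 : IntegrableOn (fun t => (s t) ^ 2) (Set.Icc 0 n)) :
    |a * ∫ t in (0 : ℝ)..n,
        s t * ∫ u in (0 : ℝ)..t,
          Real.exp (a * (t - u)) * s u * ((1 + Real.exp (2 * a * u)) / 2)|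
      ≤ ∫ t in (0 : ℝ)..n, (s t) ^ 2 := by
  have hS0 : 0 ≤ ∫ t in (0:ℝ)..n, (s t) ^ 2 :=
    intervalIntegral.integral_nonneg hn.le (fun t _ => sq_nonneg _)
  rcases eq_or_lt_of_le ha with rfl | ha'
  · simpa using hS0
  set b : ℝ := -a with hbdef
  have hb : 0 < b := neg_pos.mpr ha'
  set S : ℝ := ∫ t in (0:ℝ)..n, (s t) ^ 2 with hSdef
  -- integrability of s
  have hsInt : IntegrableOn s (Set.Icc 0 n) := by
    have hg : IntegrableOn (fun t => s t ^ 2 + 1) (Set.Icc 0 n) :=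
      hs2.add ((integrableOn_const_iff (C := (1:ℝ))).mpr (Or.inr measure_Icc_lt_top))
    exact hg.mono' hs.aestronglyMeasurable.restrict
      (ae_of_all _ fun t => by
        rw [Real.norm_eq_abs]
        nlinarith [sq_abs (s t), sq_nonneg (|s t| - 1)])
  -- the kernel function
  set k : ℝ → ℝ := fun u => Real.exp (-(a*u)) * s u * ((1 + Real.exp (2*a*u))/2) with hkdef
  have hk_int : IntegrableOn k (Set.Icc 0 n) := by
    have hg : IntegrableOn (fun u => Real.exp (b*n) * |s u|) (Set.Icc 0 n) :=
      hsInt.abs.const_mul _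
    have hk_meas : Measurable k := by
      rw [hkdef]
      exact (((measurable_const.mul measurable_id).neg.exp).mul hs).mul
        (((measurable_const.mul measurable_id).exp.const_add 1).div_const 2)
    refine hg.mono' ?_ ?_
    · exact hk_meas.aestronglyMeasurable.restrict
    · refine ae_restrict_of_forall_mem measurableSet_Icc fun u hu => ?_
      have hu0 : 0 ≤ u := hu.1
      have hun : u ≤ n := hu.2
      have hc1 : Real.exp (2*a*u) ≤ 1 := Real.exp_le_one_iff.mpr (by nlinarith)
      have hc0 : 0 < (1 + Real.exp (2*a*u))/2 := by positivity
      have he : Real.exp (-(a*u)) ≤ Real.exp (b*n) :=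
        Real.exp_le_exp.mpr (by rw [hbdef]; nlinarith)
      rw [Real.norm_eq_abs, hkdef]
      simp only
      rw [abs_mul, abs_mul, abs_of_pos (Real.exp_pos _), abs_of_pos hc0]
      calc Real.exp (-(a*u)) * |s u| * ((1 + Real.exp (2*a*u))/2)
          ≤ Real.exp (-(a*u)) * |s u| * 1 := by
            apply mul_le_mul_of_nonneg_left (by linarith) (by positivity)
        _ ≤ Real.exp (b*n) * |s u| := by rw [mul_one]; exact mul_le_mul_of_nonneg_right he (abs_nonneg _)
  set J : ℝ → ℝ := fun t => ∫ u in (0:ℝ)..t, k u with hJdef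
  have hJcont : ContinuousOn J (Set.Icc 0 n) := by
    have := intervalIntegral.continuousOn_primitive_interval
      (a := (0:ℝ)) (b := n) (f := k) (μ := volume) (by rwa [Set.uIcc_of_le hn.le])
    rwa [Set.uIcc_of_le hn.le] at this
  -- rewrite the inner integral
  have hkey : ∀ t : ℝ, (∫ u in (0:ℝ)..t,
      Real.exp (a * (t - u)) * s u * ((1 + Real.exp (2 * a * u)) / 2)) = Real.exp (a*t) * J t := by
    intro t
    rw [hJdef]
    simp only
    rw [← intervalIntegral.integral_const_mul]
    apply intervalIntegral.integral_congr
    intro u _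
    have : Real.exp (a * (t - u)) = Real.exp (a*t) * Real.exp (-(a*u)) := by
      rw [← Real.exp_add]; ring_nf
    rw [hkdef]; simp only; rw [this]; ring
  -- q and D
  set q : ℝ → ℝ := fun u => s u ^ 2 * Real.exp (-(a*u)) with hqdef
  have hq_nonneg : ∀ u, 0 ≤ q u := fun u => by rw [hqdef]; positivity
  have hq_int : IntegrableOn q (Set.Icc 0 n) := by
    apply hs2.mul_continuousOn ?_ isCompact_Icc
    exact (Real.continuous_exp.comp (continuous_const.mul continuous_id).neg).continuousOn
  set D : ℝ → ℝ := fun t => Real.exp (a*t)/2 * ∫ u in (0:ℝ)..t, q u with hDdef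
  have hDcont : ContinuousOn D (Set.Icc 0 n) := by
    apply ContinuousOn.mul
    · exact ((Real.continuous_exp.comp (continuous_const.mul continuous_id)).div_const 2).continuousOn
    · have := intervalIntegral.continuousOn_primitive_interval
        (a := (0:ℝ)) (b := n) (f := q) (μ := volume) (by rwa [Set.uIcc_of_le hn.le])
      rwa [Set.uIcc_of_le hn.le] at this
  have hD_nonneg : ∀ t ∈ Set.Icc (0:ℝ) n, 0 ≤ D t := by
    intro t ht
    rw [hDdef]
    have : 0 ≤ ∫ u in (0:ℝ)..t, q u :=
      intervalIntegral.integral_nonneg ht.1 (fun u _ => hq_nonneg u)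
    positivity
  -- pointwise bound
  have claimA : ∀ t ∈ Set.Icc (0:ℝ) n,
      |s t * (Real.exp (a*t) * J t)| ≤ s t ^ 2 * ((1 - Real.exp (a*t))/(2*b)) + D t := by
    intro t ht
    obtain ⟨ht0, htn⟩ := ht
    have hsub : Set.Icc (0:ℝ) t ⊆ Set.Icc 0 n := Set.Icc_subset_Icc le_rfl htn
    have hkt : IntervalIntegrable k volume 0 t := by
      apply IntegrableOn.intervalIntegrable
      rw [Set.uIcc_of_le ht0]
      exact hk_int.mono_set hsub
    have hqt : IntervalIntegrable q volume 0 t := by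
      apply IntegrableOn.intervalIntegrable
      rw [Set.uIcc_of_le ht0]
      exact hq_int.mono_set hsub
    have hcont1 : Continuous fun u : ℝ => s t ^ 2 / 2 * Real.exp (a*(t-u)) :=
      continuous_const.mul ((continuous_const.mul (continuous_const.sub continuous_id)).rexp)
    set φ : ℝ → ℝ := fun u => s t ^ 2 / 2 * Real.exp (a*(t-u)) + Real.exp (a*t)/2 * q u with hφdef
    have hφint : IntervalIntegrable φ volume 0 t := by
      apply IntervalIntegrable.add
      · exact hcont1.intervalIntegrable _ _
      · exact hqt.const_mul _
    have e1 : |J t| ≤ ∫ u in (0:ℝ)..t, |k u| := by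
      simpa only [Real.norm_eq_abs] using
        intervalIntegral.norm_integral_le_integral_norm (f := k) (μ := volume) ht0
    have e5 : ∫ u in (0:ℝ)..t, (|s t| * Real.exp (a*t)) * |k u| ≤ ∫ u in (0:ℝ)..t, φ u := by
      apply intervalIntegral.integral_mono_on ht0 ((hkt.abs).const_mul _) hφint
      intro u hu
      obtain ⟨hu0, hut⟩ := hu
      have hc1 : Real.exp (2*a*u) ≤ 1 := Real.exp_le_one_iff.mpr (by nlinarith)
      have hc0 : 0 < (1 + Real.exp (2*a*u))/2 := by positivity
      have hka : |k u| = Real.exp (-(a*u)) * |s u| * ((1 + Real.exp (2*a*u))/2) := by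
        rw [hkdef]
        simp only
        rw [abs_mul, abs_mul, abs_of_pos (Real.exp_pos _), abs_of_pos hc0]
      have hku : |k u| ≤ Real.exp (-(a*u)) * |s u| := by
        rw [hka]
        exact mul_le_of_le_one_right (by positivity) (by linarith)
      have hprod : Real.exp (a*t) * Real.exp (-(a*u)) = Real.exp (a*(t-u)) := by
        rw [← Real.exp_add]; ring_nf
      have habs2 : |s t| * |s u| ≤ (s t ^ 2 + s u ^ 2)/2 := by
        nlinarith [sq_nonneg (|s t| - |s u|), sq_abs (s t), sq_abs (s u)]
      calc (|s t| * Real.exp (a*t)) * |k u|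
          ≤ (|s t| * Real.exp (a*t)) * (Real.exp (-(a*u)) * |s u|) :=
            mul_le_mul_of_nonneg_left hku (by positivity)
        _ = (|s t| * |s u|) * (Real.exp (a*t) * Real.exp (-(a*u))) := by ring
        _ ≤ ((s t ^ 2 + s u ^ 2)/2) * (Real.exp (a*t) * Real.exp (-(a*u))) :=
            mul_le_mul_of_nonneg_right habs2 (by positivity)
        _ = φ u := by simp only [hφdef, hqdef, ← hprod]; ring
    have e6 : ∫ u in (0:ℝ)..t, φ u = s t ^ 2 * ((1 - Real.exp (a*t))/(2*b)) + D t := by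
      rw [hφdef]
      simp only
      have hker : ∫ x in (0:ℝ)..t, Real.exp (a*(t-x)) = (Real.exp (a*t) - 1)/a := by
        rw [intervalIntegral.integral_comp_sub_left (fun x => Real.exp (a*x)) t, sub_self,
          sub_zero, aux_exp_integral a _ _ ha'.ne]
        simp
      rw [intervalIntegral.integral_add (hcont1.intervalIntegrable _ _)
        (hqt.const_mul _), intervalIntegral.integral_const_mul,
        intervalIntegral.integral_const_mul, hker]
      rw [hDdef, hbdef]
      simp only
      congr 1
      field_simp
      ring
    calc |s t * (Real.exp (a*t) * J t)|
        = (|s t| * Real.exp (a*t)) * |J t| := by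
          rw [abs_mul, abs_mul, abs_of_pos (Real.exp_pos _)]; ring
      _ ≤ (|s t| * Real.exp (a*t)) * ∫ u in (0:ℝ)..t, |k u| :=
          mul_le_mul_of_nonneg_left e1 (by positivity)
      _ = ∫ u in (0:ℝ)..t, (|s t| * Real.exp (a*t)) * |k u| :=
          (intervalIntegral.integral_const_mul _ _).symm
      _ ≤ ∫ u in (0:ℝ)..t, φ u := e5
      _ = _ := e6
  -- integrability of pieces
  have hfInt : IntegrableOn (fun t => s t * (Real.exp (a*t) * J t)) (Set.Icc 0 n) := by
    apply hsInt.mul_continuousOn ?_ isCompact_Icc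
    exact ((Real.continuous_exp.comp (continuous_const.mul continuous_id)).continuousOn).mul hJcont
  have hB1Int : IntegrableOn (fun t => s t ^ 2 * ((1 - Real.exp (a*t))/(2*b))) (Set.Icc 0 n) := by
    apply hs2.mul_continuousOn ?_ isCompact_Icc
    exact ((continuous_const.sub (Real.continuous_exp.comp (continuous_const.mul continuous_id))).div_const _).continuousOn
  have toII : ∀ {f : ℝ → ℝ}, IntegrableOn f (Set.Icc 0 n) → IntervalIntegrable f volume 0 n := by
    intro f hf
    rw [← Set.uIcc_of_le hn.le] at hf
    exact hf.intervalIntegrable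
  -- main chain
  have step1 : |∫ t in (0:ℝ)..n, s t * (Real.exp (a*t) * J t)|
      ≤ ∫ t in (0:ℝ)..n, |s t * (Real.exp (a*t) * J t)| := by
    simpa only [Real.norm_eq_abs] using
      intervalIntegral.norm_integral_le_integral_norm (f := fun t => s t * (Real.exp (a*t) * J t))
        (μ := volume) hn.le
  have step2 : ∫ t in (0:ℝ)..n, |s t * (Real.exp (a*t) * J t)|
      ≤ ∫ t in (0:ℝ)..n, (s t ^ 2 * ((1 - Real.exp (a*t))/(2*b)) + D t) := by
    apply intervalIntegral.integral_mono_on hn.le (toII hfInt.abs)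
      (toII (hB1Int.add (hDcont.integrableOn_Icc)))
    exact claimA
  have step3 : ∫ t in (0:ℝ)..n, (s t ^ 2 * ((1 - Real.exp (a*t))/(2*b)) + D t)
      = (∫ t in (0:ℝ)..n, s t ^ 2 * ((1 - Real.exp (a*t))/(2*b))) + ∫ t in (0:ℝ)..n, D t :=
    intervalIntegral.integral_add (toII hB1Int) (toII hDcont.integrableOn_Icc)
  have step4 : (∫ t in (0:ℝ)..n, s t ^ 2 * ((1 - Real.exp (a*t))/(2*b))) ≤ S / (2*b) := by
    have h1 : (∫ t in (0:ℝ)..n, s t ^ 2 * ((1 - Real.exp (a*t))/(2*b)))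
        ≤ ∫ t in (0:ℝ)..n, s t ^ 2 * (1/(2*b)) := by
      apply intervalIntegral.integral_mono_on hn.le (toII hB1Int) (toII (hs2.mul_const _))
      intro t _
      apply mul_le_mul_of_nonneg_left _ (sq_nonneg _)
      have : 1 - Real.exp (a*t) ≤ 1 := by nlinarith [Real.exp_pos (a*t)]
      exact div_le_div_of_nonneg_right this (by positivity)
    have h2 : (∫ t in (0:ℝ)..n, s t ^ 2 * (1/(2*b))) = S * (1/(2*b)) := by
      rw [intervalIntegral.integral_mul_const, hSdef]
    rw [h2] at h1
    calc _ ≤ S * (1/(2*b)) := h1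
      _ = S / (2*b) := by ring
  have step5 : (∫ t in (0:ℝ)..n, D t) ≤ S / (2*b) := by
    have hSb : 0 ≤ S / (2*b) := by positivity
    set G : ℝ → ℝ → ENNReal := fun t u => ENNReal.ofReal (Real.exp (a*t)/2 * q u) with hGdef
    set f : ℝ → ℝ → ENNReal := fun t u =>
      Set.indicator {p : ℝ × ℝ | p.2 ∈ Set.Ioc 0 p.1} (fun p => G p.1 p.2) (t, u) with hfdef
    rw [intervalIntegral.integral_of_le hn.le]
    have hDmeas : AEStronglyMeasurable D (volume.restrict (Set.Ioc 0 n)) :=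
      (hDcont.mono Set.Ioc_subset_Icc_self).aestronglyMeasurable measurableSet_Ioc
    have hDnn : 0 ≤ᵐ[volume.restrict (Set.Ioc 0 n)] D :=
      ae_restrict_of_forall_mem measurableSet_Ioc fun t ht =>
        hD_nonneg t (Set.Ioc_subset_Icc_self ht)
    rw [integral_eq_lintegral_of_nonneg_ae hDnn hDmeas]
    suffices hL : (∫⁻ t in Set.Ioc 0 n, ENNReal.ofReal (D t)) ≤ ENNReal.ofReal (S/(2*b)) from
      ENNReal.toReal_le_of_le_ofReal hSb hL
    have e1 : ∀ t ∈ Set.Ioc (0:ℝ) n, ENNReal.ofReal (D t) = ∫⁻ u in Set.Ioc 0 t, G t u := by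
      intro t ht
      have hqint : IntegrableOn (fun u => Real.exp (a*t)/2 * q u) (Set.Ioc 0 t) :=
        Integrable.const_mul
          (hq_int.mono_set (Set.Ioc_subset_Icc_self.trans (Set.Icc_subset_Icc le_rfl ht.2))) _
      have hDt : D t = ∫ u in Set.Ioc 0 t, Real.exp (a*t)/2 * q u := by
        rw [hDdef]
        simp only
        rw [← intervalIntegral.integral_const_mul, intervalIntegral.integral_of_le ht.1.le]
      rw [hDt, ofReal_integral_eq_lintegral_ofReal hqint
        (ae_restrict_of_forall_mem measurableSet_Ioc fun u _ => by
          have := hq_nonneg u; positivity)]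
    rw [setLIntegral_congr_fun measurableSet_Ioc e1]
    have e2 : ∀ t ∈ Set.Ioc (0:ℝ) n,
        (∫⁻ u in Set.Ioc 0 t, G t u) = ∫⁻ u in Set.Ioc 0 n, f t u := by
      intro t ht
      have hft : (fun u => f t u) = (Set.Ioc 0 t).indicator (G t) := by
        funext u
        by_cases h : u ∈ Set.Ioc 0 t
        · rw [hfdef]
          simp only
          rw [Set.indicator_of_mem h, Set.indicator_of_mem]
          exact h
        · rw [hfdef]
          simp only
          rw [Set.indicator_of_notMem h, Set.indicator_of_notMem]
          exact h
      rw [hft, lintegral_indicator measurableSet_Ioc, Measure.restrict_restrict measurableSet_Ioc,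
        Set.inter_eq_left.mpr (Set.Ioc_subset_Ioc le_rfl ht.2)]
    rw [setLIntegral_congr_fun measurableSet_Ioc e2]
    have hGm : Measurable (fun p : ℝ × ℝ => G p.1 p.2) := by
      rw [hGdef, hqdef]
      simp only
      exact ENNReal.measurable_ofReal.comp
        (((measurable_const.mul measurable_fst).exp.div_const 2).mul
          (((hs.comp measurable_snd).pow_const 2).mul
            ((measurable_const.mul measurable_snd).neg.exp)))
    have hSm : MeasurableSet {p : ℝ × ℝ | p.2 ∈ Set.Ioc 0 p.1} :=
      (measurableSet_lt measurable_const measurable_snd).inter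
        (measurableSet_le measurable_snd measurable_fst)
    have hswap : (∫⁻ t in Set.Ioc 0 n, ∫⁻ u in Set.Ioc 0 n, f t u)
        = ∫⁻ u in Set.Ioc 0 n, ∫⁻ t in Set.Ioc 0 n, f t u := by
      apply lintegral_lintegral_swap
      apply Measurable.aemeasurable
      have huf : Function.uncurry f = Set.indicator {p : ℝ × ℝ | p.2 ∈ Set.Ioc 0 p.1}
          (fun p => G p.1 p.2) := by
        funext p
        cases p
        rfl
      rw [huf]
      exact hGm.indicator hSm
    rw [hswap]
    have e3 : ∀ u ∈ Set.Ioc (0:ℝ) n,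
        (∫⁻ t in Set.Ioc 0 n, f t u) ≤ ENNReal.ofReal (s u ^ 2 * (1/(2*b))) := by
      intro u hu
      have hun : u ≤ n := hu.2
      have hfu : (fun t => f t u) = (Set.Ici u).indicator (fun t => G t u) := by
        funext t
        by_cases hle : u ≤ t
        · rw [hfdef]
          simp only
          rw [Set.indicator_of_mem (Set.mem_setOf_eq ▸ (⟨hu.1, hle⟩ : u ∈ Set.Ioc 0 t)),
            Set.indicator_of_mem (Set.mem_Ici.mpr hle)]
        · have hnm1 : (t, u) ∉ {p : ℝ × ℝ | p.2 ∈ Set.Ioc 0 p.1} := fun h => hle h.2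
          have hnm2 : t ∉ Set.Ici u := fun h => hle (Set.mem_Ici.mp h)
          rw [hfdef]
          simp only
          rw [Set.indicator_of_notMem hnm1, Set.indicator_of_notMem hnm2]
      rw [hfu, lintegral_indicator measurableSet_Ici,
        Measure.restrict_restrict measurableSet_Ici]
      have hset : Set.Ici u ∩ Set.Ioc 0 n = Set.Icc u n := by
        ext t
        simp only [Set.mem_inter_iff, Set.mem_Ici, Set.mem_Ioc, Set.mem_Icc]
        constructor
        · rintro ⟨h1, _, h3⟩; exact ⟨h1, h3⟩
        · rintro ⟨h1, h2⟩; exact ⟨h1, lt_of_lt_of_le hu.1 h1, h2⟩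
      rw [hset]
      have hcont : Continuous fun t : ℝ => Real.exp (a*t)/2 * q u :=
        (((continuous_const.mul continuous_id).rexp).div_const 2).mul continuous_const
      have hInt : IntegrableOn (fun t => Real.exp (a*t)/2 * q u) (Set.Icc u n) :=
        hcont.integrableOn_Icc
      have hrev : (∫⁻ t in Set.Icc u n, G t u)
          = ENNReal.ofReal (∫ t in Set.Icc u n, Real.exp (a*t)/2 * q u) :=
        (ofReal_integral_eq_lintegral_ofReal hInt
          (ae_of_all _ fun t => by have := hq_nonneg u; positivity)).symm
      rw [hrev]
      apply ENNReal.ofReal_le_ofReal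
      have hval : ∫ t in Set.Icc u n, Real.exp (a*t)/2 * q u
          = q u / 2 * ((Real.exp (a*n) - Real.exp (a*u))/a) := by
        rw [integral_Icc_eq_integral_Ioc, ← intervalIntegral.integral_of_le hun]
        have hfn : (fun t => Real.exp (a*t)/2 * q u) = fun t => (q u / 2) * Real.exp (a*t) := by
          funext t; ring
        rw [hfn, intervalIntegral.integral_const_mul, aux_exp_integral a u n ha'.ne]
      rw [hval]
      have hqe : q u * Real.exp (a*u) = s u ^ 2 := by
        rw [hqdef]
        simp only
        rw [mul_assoc, ← Real.exp_add]
        simp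
      have hfrac : (Real.exp (a*n) - Real.exp (a*u))/a
          = (Real.exp (a*u) - Real.exp (a*n)) / b := by
        rw [hbdef]
        rw [div_eq_div_iff ha'.ne (neg_ne_zero.mpr ha'.ne)]
        ring
      rw [hfrac]
      have hrw1 : q u / 2 * ((Real.exp (a*u) - Real.exp (a*n)) / b)
          = (q u * (Real.exp (a*u) - Real.exp (a*n))) / (2*b) := by ring
      have hrw2 : s u ^ 2 * (1/(2*b)) = s u ^ 2 / (2*b) := by ring
      rw [hrw1, hrw2]
      apply div_le_div_of_nonneg_right _ (by positivity)
      nlinarith [mul_nonneg (hq_nonneg u) (Real.exp_pos (a*n)).le]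
    calc (∫⁻ u in Set.Ioc 0 n, ∫⁻ t in Set.Ioc 0 n, f t u)
        ≤ ∫⁻ u in Set.Ioc 0 n, ENNReal.ofReal (s u ^ 2 * (1/(2*b))) :=
          setLIntegral_mono' measurableSet_Ioc e3
      _ = ENNReal.ofReal (∫ u in Set.Ioc 0 n, s u ^ 2 * (1/(2*b))) :=
          (ofReal_integral_eq_lintegral_ofReal
            ((hs2.mono_set Set.Ioc_subset_Icc_self).mul_const _)
            (ae_of_all _ fun u => by positivity)).symm
      _ = ENNReal.ofReal (S/(2*b)) := by
          rw [integral_mul_const]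
          congr 1
          rw [← intervalIntegral.integral_of_le hn.le, ← hSdef]
          ring
  -- conclude
  have hrw : (∫ t in (0:ℝ)..n, s t * ∫ u in (0:ℝ)..t,
      Real.exp (a * (t - u)) * s u * ((1 + Real.exp (2 * a * u)) / 2))
      = ∫ t in (0:ℝ)..n, s t * (Real.exp (a*t) * J t) := by
    apply intervalIntegral.integral_congr
    intro t _
    dsimp only
    rw [hkey t]
  rw [hrw, abs_mul, abs_of_neg ha']
  calc (-a) * |∫ t in (0:ℝ)..n, s t * (Real.exp (a*t) * J t)|
      ≤ b * (S/(2*b) + S/(2*b)) := by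
        apply mul_le_mul_of_nonneg_left _ hb.le
        calc |∫ t in (0:ℝ)..n, s t * (Real.exp (a*t) * J t)|
            ≤ ∫ t in (0:ℝ)..n, |s t * (Real.exp (a*t) * J t)| := step1
          _ ≤ _ := step2
          _ = _ := step3
          _ ≤ S/(2*b) + S/(2*b) := add_le_add step4 step5
    _ = S := by field_simp; ring
end
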